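/- Let V be an m-dimensional real inner product space with orthonormal basis (fᵢ), S : V → V self-adjoint, and ω ∈ Λ^p V. Then ⟨S^{[p]}ω, ω⟩ = Σᵢ ⟨ι_{S(fᵢ)} ω, ι_{fᵢ} ω⟩, where ι denotes interior product (contraction). -/

import Mathlib

noncomputable section
open Finset

/-- `m`-dimensional Euclidean space. -/
abbrev E (m : ℕ) := EuclideanSpace ℝ (Fin m)

/-- standard orthonormal basis vector -/
def sb (m : ℕ) (i : Fin m) : E m := EuclideanSpace.single i 1

/-- the induced inner product on `p`-forms (computed via the standard basis) -/
def rInner (m p : ℕ) (f g : (Fin p → E m) → ℝ) : ℝ :=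
  (Nat.factorial p : ℝ)⁻¹ *
    ∑ σ : Fin p → Fin m, f (fun k => sb m (σ k)) * g (fun k => sb m (σ k))

/-- the induced norm on `p`-forms -/
def rNorm (m p : ℕ) (f : (Fin p → E m) → ℝ) : ℝ := Real.sqrt (rInner m p f f)

/-- the derivation extension `S^{[p]}` of an endomorphism `S` to `p`-forms:
`S^{[p]}ω(X₁,…,X_p) = Σᵢ ω(X₁,…,S Xᵢ,…,X_p)` -/
def sder (m : ℕ) (S : E m →ₗ[ℝ] E m) (p : ℕ) (f : (Fin p → E m) → ℝ) :
    (Fin p → E m) → ℝ :=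
  fun X => ∑ i : Fin p, f (Function.update X i (S (X i)))

/-- interior product of a vector with a `(p+1)`-form -/
def iprod (m p : ℕ) (v : E m) (f : (Fin (p+1) → E m) → ℝ) : (Fin p → E m) → ℝ :=
  fun Y => f (Fin.cons v Y)

/-- wedge of a vector (via the metric) with a `p`-form -/
def wedgeV (m p : ℕ) (v : E m) (f : (Fin p → E m) → ℝ) : (Fin (p+1) → E m) → ℝ :=
  fun Y => ∑ i : Fin (p+1),
    (-1 : ℝ) ^ (i : ℕ) * (inner ℝ v (Y i) : ℝ) * f (fun k => Y (i.succAbove k))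

/-- interior product of the `s`-vector `X₁ ∧ ⋯ ∧ X_s` with an `(s+t)`-form:
`(Y₁,…,Y_t) ↦ ω(X_s,…,X₁,Y₁,…,Y_t)` -/
def iprodMulti (m s t : ℕ) (X : Fin s → E m) (f : (Fin (s+t) → E m) → ℝ) :
    (Fin t → E m) → ℝ :=
  fun Y => f (Fin.append (fun k => X k.rev) Y)

/-- wedge `X₁ ∧ ⋯ ∧ X_s ∧ ψ` of an `s`-tuple of vectors (via the metric) with a `t`-form -/
def wedgeMulti (m s t : ℕ) (X : Fin s → E m) (f : (Fin t → E m) → ℝ) :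
    (Fin (s+t) → E m) → ℝ :=
  fun Y => ((Nat.factorial s * Nat.factorial t : ℕ) : ℝ)⁻¹ *
    ∑ σ : Equiv.Perm (Fin (s+t)),
      ((Equiv.Perm.sign σ : ℤ) : ℝ) *
        Matrix.det (Matrix.of fun i j : Fin s =>
          (inner ℝ (X i) (Y (σ (Fin.castAdd t j))) : ℝ)) *
        f (fun k => Y (σ (Fin.natAdd s k)))


open RealInnerProductSpace in
lemma riesz (m : ℕ) (L : E m →ₗ[ℝ] ℝ) : ∃ v : E m, ∀ x, L x = ⟪v, x⟫ := by
  refine ⟨(InnerProductSpace.toDual ℝ (E m)).symm (LinearMap.toContinuousLinearMap L), fun x => ?_⟩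
  rw [InnerProductSpace.toDual_symm_apply]
  simp

lemma basis_sum_eq (m : ℕ) (L1 L2 : E m →ₗ[ℝ] ℝ) (b c : OrthonormalBasis (Fin m) ℝ (E m)) :
    ∑ i, L1 (b i) * L2 (b i) = ∑ j, L1 (c j) * L2 (c j) := by
  obtain ⟨v1, hv1⟩ := riesz m L1
  obtain ⟨v2, hv2⟩ := riesz m L2
  have key : ∀ d : OrthonormalBasis (Fin m) ℝ (E m),
      ∑ i, L1 (d i) * L2 (d i) = inner ℝ v1 v2 := by
    intro d
    rw [← d.sum_inner_mul_inner v1 v2]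
    refine Finset.sum_congr rfl fun i _ => ?_
    rw [hv1, hv2, real_inner_comm (d i) v2]
  rw [key b, key c]

def consL (m p : ℕ) (ω : (E m) [⋀^Fin (p+1)]→ₗ[ℝ] ℝ) (Y : Fin p → E m) : E m →ₗ[ℝ] ℝ where
  toFun v := ω (Fin.cons v Y)
  map_add' u v := ω.toMultilinearMap.cons_add Y u v
  map_smul' c u := ω.toMultilinearMap.cons_smul Y c u

def Xv (m p : ℕ) (σ : Fin p → Fin m) : Fin p → E m := fun k => sb m (σ k)

/-- for a self-adjoint `S`, an orthonormal basis `(fᵢ)` and a form `ω`,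
`⟨S^{[p]}ω, ω⟩ = Σᵢ ⟨ι_{S fᵢ} ω, ι_{fᵢ} ω⟩`. -/
theorem sder_inner_eq_sum_contractions (m p : ℕ) (S : E m →ₗ[ℝ] E m)
    (hSsym : ∀ x y : E m, (inner ℝ (S x) y : ℝ) = inner ℝ x (S y))
    (f : OrthonormalBasis (Fin m) ℝ (E m))
    (ω : (E m) [⋀^Fin (p+1)]→ₗ[ℝ] ℝ) :
    rInner m (p+1) (sder m S (p+1) ⇑ω) ⇑ω =
      ∑ i : Fin m, rInner m p (iprod m p (S (f i)) ⇑ω) (iprod m p (f i) ⇑ω) := by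
    classical
  have stepB : ∀ i : Fin (p+1),
      (∑ σ : Fin (p+1) → Fin m,
        ω (Function.update (Xv m (p+1) σ) i (S (Xv m (p+1) σ i))) * ω (Xv m (p+1) σ))
      = ∑ σ : Fin (p+1) → Fin m,
        ω (Function.update (Xv m (p+1) σ) 0 (S (Xv m (p+1) σ 0))) * ω (Xv m (p+1) σ) := by
    intro i
    rcases eq_or_ne i 0 with rfl | hi
    · rfl
    · set c : Equiv.Perm (Fin (p+1)) := Equiv.swap 0 i with hc
      have hc0 : c 0 = i := Equiv.swap_apply_left 0 i
      have hci : c i = 0 := Equiv.swap_apply_right 0 i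
      have hsign : Equiv.Perm.sign c = -1 := Equiv.Perm.sign_swap (Ne.symm hi)
      set e : (Fin (p+1) → Fin m) ≃ (Fin (p+1) → Fin m) :=
        Equiv.arrowCongr c.symm (Equiv.refl (Fin m)) with he
      rw [← Equiv.sum_comp e (fun σ => ω (Function.update (Xv m (p+1) σ) i
        (S (Xv m (p+1) σ i))) * ω (Xv m (p+1) σ))]
      refine Finset.sum_congr rfl fun σ _ => ?_
      have hXe : Xv m (p+1) (e σ) = Xv m (p+1) σ ∘ ⇑c := rfl
      have hv : Xv m (p+1) (e σ) i = Xv m (p+1) σ 0 := by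
        rw [hXe]; simp [hci]
      have h2 : Function.update (Xv m (p+1) (e σ)) i (S (Xv m (p+1) (e σ) i)) =
          Function.update (Xv m (p+1) σ) 0 (S (Xv m (p+1) σ 0)) ∘ ⇑c := by
        rw [hv, hXe, Function.update_comp_equiv (Xv m (p+1) σ) c 0 (S (Xv m (p+1) σ 0)),
          Equiv.symm_swap, hc0]
      have hA : ω (Function.update (Xv m (p+1) σ) 0 (S (Xv m (p+1) σ 0)) ∘ ⇑c) =
          - ω (Function.update (Xv m (p+1) σ) 0 (S (Xv m (p+1) σ 0))) := by
        rw [ω.map_perm, hsign, Units.neg_smul, one_smul]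
      have hB : ω (Xv m (p+1) σ ∘ ⇑c) = - ω (Xv m (p+1) σ) := by
        rw [ω.map_perm, hsign, Units.neg_smul, one_smul]
      rw [h2, hXe, hA, hB, neg_mul_neg]
  have stepC : (∑ σ : Fin (p+1) → Fin m,
        ω (Function.update (Xv m (p+1) σ) 0 (S (Xv m (p+1) σ 0))) * ω (Xv m (p+1) σ))
      = ∑ j : Fin m, ∑ τ : Fin p → Fin m,
          consL m p ω (Xv m p τ) (S (sb m j)) * consL m p ω (Xv m p τ) (sb m j) := by
    rw [← Equiv.sum_comp (Fin.consEquiv (fun _ : Fin (p+1) => Fin m))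
      (fun σ => ω (Function.update (Xv m (p+1) σ) 0 (S (Xv m (p+1) σ 0))) * ω (Xv m (p+1) σ)),
      Fintype.sum_prod_type]
    refine Finset.sum_congr rfl fun j _ => Finset.sum_congr rfl fun τ _ => ?_
    have hXc : Xv m (p+1) (Fin.consEquiv (fun _ : Fin (p+1) => Fin m) (j, τ)) =
        Fin.cons (sb m j) (Xv m p τ) := by
      funext k
      refine Fin.cases ?_ (fun l => ?_) k <;> simp [Xv, Fin.consEquiv]
    rw [hXc]
    have h0 : (Fin.cons (sb m j) (Xv m p τ) : Fin (p+1) → E m) 0 = sb m j := rfl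
    rw [h0, Fin.update_cons_zero]
    rfl
  have hfact : ((p+1).factorial : ℝ) = ((p:ℝ)+1) * (p.factorial : ℝ) := by
    rw [Nat.factorial_succ]; push_cast; ring
  have hp1 : ((p:ℝ)+1) ≠ 0 := by positivity
  have hpf : ((p.factorial : ℝ)) ≠ 0 := by
    exact_mod_cast Nat.factorial_ne_zero p
  have hsb : ∀ j, sb m j = EuclideanSpace.basisFun (Fin m) ℝ j := by
    intro j; rw [EuclideanSpace.basisFun_apply]; rfl
  calc rInner m (p+1) (sder m S (p+1) ⇑ω) ⇑ω
      = ((p+1).factorial : ℝ)⁻¹ * ∑ σ : Fin (p+1) → Fin m,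
          (∑ i : Fin (p+1), ω (Function.update (Xv m (p+1) σ) i (S (Xv m (p+1) σ i))))
            * ω (Xv m (p+1) σ) := rfl
    _ = ((p+1).factorial : ℝ)⁻¹ * ∑ i : Fin (p+1), ∑ σ : Fin (p+1) → Fin m,
          ω (Function.update (Xv m (p+1) σ) i (S (Xv m (p+1) σ i))) * ω (Xv m (p+1) σ) := by
        rw [Finset.sum_comm]
        simp only [Finset.sum_mul]
    _ = ((p+1).factorial : ℝ)⁻¹ * ∑ _i : Fin (p+1), ∑ σ : Fin (p+1) → Fin m,
          ω (Function.update (Xv m (p+1) σ) 0 (S (Xv m (p+1) σ 0))) * ω (Xv m (p+1) σ) := by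
        rw [Finset.sum_congr rfl fun i _ => stepB i]
    _ = (p.factorial : ℝ)⁻¹ * ∑ σ : Fin (p+1) → Fin m,
          ω (Function.update (Xv m (p+1) σ) 0 (S (Xv m (p+1) σ 0))) * ω (Xv m (p+1) σ) := by
        rw [Finset.sum_const, card_univ, Fintype.card_fin, nsmul_eq_mul, hfact]
        push_cast
        field_simp
    _ = (p.factorial : ℝ)⁻¹ * ∑ j : Fin m, ∑ τ : Fin p → Fin m,
          consL m p ω (Xv m p τ) (S (sb m j)) * consL m p ω (Xv m p τ) (sb m j) := by
        rw [stepC]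
    _ = (p.factorial : ℝ)⁻¹ * ∑ τ : Fin p → Fin m, ∑ j : Fin m,
          ((consL m p ω (Xv m p τ)).comp S) (sb m j) * consL m p ω (Xv m p τ) (sb m j) := by
        rw [Finset.sum_comm]; rfl
    _ = (p.factorial : ℝ)⁻¹ * ∑ τ : Fin p → Fin m, ∑ i : Fin m,
          ((consL m p ω (Xv m p τ)).comp S) (f i) * consL m p ω (Xv m p τ) (f i) := by
        refine congrArg _ (Finset.sum_congr rfl fun τ _ => ?_)
        simp_rw [hsb]
        exact basis_sum_eq m _ _ (EuclideanSpace.basisFun (Fin m) ℝ) f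
    _ = ∑ i : Fin m, (p.factorial : ℝ)⁻¹ * ∑ τ : Fin p → Fin m,
          consL m p ω (Xv m p τ) (S (f i)) * consL m p ω (Xv m p τ) (f i) := by
        rw [Finset.sum_comm, Finset.mul_sum]; rfl
    _ = ∑ i : Fin m, rInner m p (iprod m p (S (f i)) ⇑ω) (iprod m p (f i) ⇑ω) := rfl
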